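/- There are no natural numbers m ≥ 1 and prime power q > 3 such that q(q - 1) = 3^(m+1)·(3^m - 1). -/

import Mathlib

/-- There are no m ≥ 1 and prime power q > 3 with q(q-1) = 3^(m+1)·(3^m - 1). -/
theorem no_ree_coincidence :
    ¬ ∃ m q : ℕ, 1 ≤ m ∧ IsPrimePow q ∧ 3 < q ∧
      q * (q - 1) = 3 ^ (m + 1) * (3 ^ m - 1) := by
  rintro ⟨m, q, hm, hpp, hq3, heq⟩
  have h3 : Nat.Prime 3 := Nat.prime_three
  have ha : 3 ≤ 3 ^ m := by
    calc 3 = 3 ^ 1 := (pow_one 3).symm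
    _ ≤ 3 ^ m := Nat.pow_le_pow_right (by norm_num) hm
  have hnd : ∀ n : ℕ, 1 ≤ n → ¬ (3 ∣ 3 ^ n - 1) := by
    intro n hn hd
    have h1 : (3 : ℕ) ∣ 3 ^ n := dvd_pow_self 3 (by omega)
    have h2 : (1 : ℕ) ≤ 3 ^ n := Nat.one_le_pow _ _ (by norm_num)
    have h4 : (3 : ℕ) ∣ 3 ^ n - (3 ^ n - 1) := Nat.dvd_sub h1 hd
    have h5 : 3 ^ n - (3 ^ n - 1) = 1 := by omega
    rw [h5] at h4
    have := Nat.le_of_dvd one_pos h4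
    omega
  by_cases hdq : 3 ∣ q
  · -- q is a power of 3
    obtain ⟨p, k, hp, hk, rfl⟩ := hpp
    have hp3 : p = 3 := by
      have hd : 3 ∣ p := h3.prime.dvd_of_dvd_pow hdq
      exact ((Nat.prime_dvd_prime_iff_eq h3 (Nat.prime_iff.mpr hp)).mp hd).symm
    subst hp3
    have hk1 : 1 ≤ k := hk
    have cop1 : Nat.Coprime (3 ^ k) (3 ^ m - 1) :=
      Nat.Coprime.pow_left _ ((h3.coprime_iff_not_dvd).mpr (hnd m hm))
    have cop2 : Nat.Coprime (3 ^ (m + 1)) (3 ^ k - 1) :=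
      Nat.Coprime.pow_left _ ((h3.coprime_iff_not_dvd).mpr (hnd k hk1))
    have d1 : 3 ^ k ∣ 3 ^ (m + 1) * (3 ^ m - 1) := by
      rw [← heq]; exact dvd_mul_right _ _
    have d2 : 3 ^ (m + 1) ∣ 3 ^ k * (3 ^ k - 1) := by
      rw [heq]; exact dvd_mul_right _ _
    have le1 : k ≤ m + 1 :=
      (Nat.pow_dvd_pow_iff_le_right (by norm_num : 1 < 3)).mp
        (Nat.Coprime.dvd_of_dvd_mul_right cop1 d1)
    have le2 : m + 1 ≤ k :=
      (Nat.pow_dvd_pow_iff_le_right (by norm_num : 1 < 3)).mp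
        (Nat.Coprime.dvd_of_dvd_mul_right cop2 d2)
    have hkm : k = m + 1 := le_antisymm le1 le2
    subst hkm
    have hpos : 0 < 3 ^ (m + 1) := Nat.pow_pos (by norm_num)
    have hcancel : 3 ^ (m + 1) - 1 = 3 ^ m - 1 := Nat.eq_of_mul_eq_mul_left hpos heq
    have hs : 3 ^ (m + 1) = 3 ^ m * 3 := pow_succ 3 m
    omega
  · -- 3 ∤ q : then 3^(m+1) ∣ q - 1, too big
    have d : 3 ^ (m + 1) ∣ q * (q - 1) := by
      rw [heq]; exact dvd_mul_right _ _
    have copq : Nat.Coprime (3 ^ (m + 1)) q :=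
      Nat.Coprime.pow_left _ ((h3.coprime_iff_not_dvd).mpr hdq)
    have d' : 3 ^ (m + 1) ∣ q - 1 := copq.dvd_of_dvd_mul_left d
    have hle : 3 ^ (m + 1) ≤ q - 1 := Nat.le_of_dvd (by omega) d'
    have hq : 3 ^ (m + 1) + 1 ≤ q := by omega
    have hmul : (3 ^ (m + 1) + 1) * (3 ^ (m + 1)) ≤ q * (q - 1) :=
      Nat.mul_le_mul hq hle
    rw [heq] at hmul
    have hmul' : 3 ^ (m + 1) * (3 ^ (m + 1) + 1) ≤ 3 ^ (m + 1) * (3 ^ m - 1) := by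
      rw [mul_comm] at hmul; exact hmul
    have hpos : 0 < 3 ^ (m + 1) := Nat.pow_pos (by norm_num)
    have hfin : 3 ^ (m + 1) + 1 ≤ 3 ^ m - 1 := Nat.le_of_mul_le_mul_left hmul' hpos
    have hs : 3 ^ (m + 1) = 3 ^ m * 3 := pow_succ 3 m
    omega
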